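/- For complex a with a ≠ 0 and |a| < 1/2 and |t| sufficiently small, the generating function Σ_{n≥0} D_{2n}(a) t^n equals 2 / (2 − a(1 − √(1 − 4t))). -/

import Mathlib

/-- The adsorbing Dyck path partition function `D_{2n}(a)` for complex `a`. -/
noncomputable def dyckPFC (n : ℕ) (a : ℂ) : ℂ :=
  ∑ ℓ ∈ Finset.range (n + 1),
    ((2 * ℓ + 1 : ℂ) / (n + ℓ + 1)) * (Nat.choose (2 * n) (n + ℓ) : ℂ) * (a - 1) ^ ℓ

open Finset

/-- Ballot numbers as integer difference of binomials. -/
def ballotZ (n ℓ : ℕ) : ℤ := (Nat.choose (2 * n) (n + ℓ) : ℤ) - (Nat.choose (2 * n) (n + ℓ + 1) : ℤ)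

lemma ballotZ_eq_zero {n ℓ : ℕ} (h : n < ℓ) : ballotZ n ℓ = 0 := by
  unfold ballotZ
  rw [Nat.choose_eq_zero_of_lt (by omega), Nat.choose_eq_zero_of_lt (by omega)]
  simp

lemma ballotZ_catalan (n : ℕ) : ballotZ n 0 = catalan n := by
  have h1 : (Nat.choose (2 * n) (n + 1) : ℤ) * (n + 1) = (Nat.choose (2 * n) n : ℤ) * n := by
    have := Nat.choose_succ_right_eq (2 * n) n
    have h2 : 2 * n - n = n := by omega
    rw [h2] at this
    exact_mod_cast this
  have h3 : ((n : ℤ) + 1) * catalan n = (Nat.choose (2 * n) n : ℤ) := by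
    have := succ_mul_catalan_eq_centralBinom n
    have h4 : n.centralBinom = Nat.choose (2 * n) n := rfl
    rw [h4] at this
    exact_mod_cast this
  have hne : ((n : ℤ) + 1) ≠ 0 := by positivity
  have : ((n : ℤ) + 1) * ballotZ n 0 = ((n : ℤ) + 1) * catalan n := by
    unfold ballotZ
    rw [h3]
    push_cast [Nat.add_zero]
    linarith [h1]
  exact mul_left_cancel₀ hne this

lemma choose_pascal2 (m k : ℕ) : Nat.choose (m + 2) (k + 2)
    = Nat.choose m k + 2 * Nat.choose m (k + 1) + Nat.choose m (k + 2) := by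
  rw [Nat.choose_succ_succ (m + 1) (k + 1), Nat.choose_succ_succ m k,
    Nat.choose_succ_succ m (k + 1)]
  ring

lemma ballotZ_pascal (n ℓ : ℕ) : ballotZ (n + 1) (ℓ + 1)
    = ballotZ n ℓ + 2 * ballotZ n (ℓ + 1) + ballotZ n (ℓ + 2) := by
  unfold ballotZ
  have e1 : 2 * (n + 1) = 2 * n + 2 := by ring
  have e2 : n + 1 + (ℓ + 1) = (n + ℓ) + 2 := by ring
  have e3 : n + 1 + (ℓ + 1) + 1 = (n + ℓ + 1) + 2 := by ring
  rw [e1, e2]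
  have e3' : n + ℓ + 2 + 1 = (n + ℓ + 1) + 2 := by ring
  rw [e3', choose_pascal2, choose_pascal2]
  have e4 : n + ℓ + 1 + 1 = n + (ℓ + 1) + 1 := by ring
  have e5 : n + ℓ + 1 + 2 = n + (ℓ + 2) + 1 := by ring
  have e6 : n + (ℓ + 1) = n + ℓ + 1 := by ring
  have e7 : n + (ℓ + 2) = n + ℓ + 2 := by ring
  rw [e4, e5, e6, e7]
  push_cast
  ring

lemma ballotZ_pascal_zero (n : ℕ) : ballotZ (n + 1) 0 = ballotZ n 0 + ballotZ n 1 := by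
  unfold ballotZ
  have e1 : 2 * (n + 1) = (2 * n + 1) + 1 := by ring
  have h1 : Nat.choose (2 * n + 2) (n + 1) = Nat.choose (2 * n + 1) n + Nat.choose (2 * n + 1) (n + 1) :=
    Nat.choose_succ_succ (2 * n + 1) n
  have hsymm : Nat.choose (2 * n + 1) (n + 1) = Nat.choose (2 * n + 1) n := by
    have := Nat.choose_symm (n := 2 * n + 1) (k := n) (by omega)
    have e : 2 * n + 1 - n = n + 1 := by omega
    rw [e] at this
    exact this
  have h2 : Nat.choose (2 * n + 1) (n + 1) = Nat.choose (2 * n) n + Nat.choose (2 * n) (n + 1) :=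
    Nat.choose_succ_succ (2 * n) n
  have h3 : Nat.choose (2 * n + 2) (n + 2) = Nat.choose (2 * n) n + 2 * Nat.choose (2 * n) (n + 1)
      + Nat.choose (2 * n) (n + 2) := choose_pascal2 (2 * n) n
  have e2 : 2 * (n + 1) = 2 * n + 2 := by ring
  have e3 : n + 1 + 0 = n + 1 := by ring
  have e4 : n + 1 + 0 + 1 = n + 2 := by ring
  rw [e2, e3]
  have e4' : n + 1 + 1 = n + 2 := by ring
  rw [hsymm] at h2
  rw [e4', h3, h1, hsymm, h2]
  simp only [Nat.add_zero]
  push_cast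
  ring

/-- The key convolution identity. -/
lemma ballotZ_conv : ∀ n ℓ : ℕ,
    (∑ m ∈ range (n + 1), (catalan m : ℤ) * ballotZ (n - m) ℓ)
      = ballotZ n ℓ + ballotZ n (ℓ + 1) := by
  intro n
  induction n with
  | zero =>
    intro ℓ
    simp [ballotZ_eq_zero (show (0:ℕ) < ℓ + 1 by omega)]
  | succ n ih =>
    intro ℓ
    have hsplit : (∑ m ∈ range (n + 2), (catalan m : ℤ) * ballotZ (n + 1 - m) ℓ)
        = (∑ m ∈ range (n + 1), (catalan m : ℤ) * ballotZ (n - m + 1) ℓ)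
          + (catalan (n + 1) : ℤ) * ballotZ 0 ℓ := by
      rw [sum_range_succ]
      congr 1
      · apply Finset.sum_congr rfl
        intro m hm
        have : n + 1 - m = n - m + 1 := by
          have := Finset.mem_range.mp hm; omega
        rw [this]
      · simp
    rw [hsplit]
    cases ℓ with
    | zero =>
      have hc : (catalan (n + 1) : ℤ) * ballotZ 0 0 = ballotZ n 0 + ballotZ n 1 := by
        have : ballotZ 0 0 = 1 := by decide
        rw [this, mul_one, ← ballotZ_pascal_zero, ballotZ_catalan]
      have hterm : ∀ m, ballotZ (n - m + 1) 0 = ballotZ (n - m) 0 + ballotZ (n - m) 1 :=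
        fun m => ballotZ_pascal_zero (n - m)
      calc (∑ m ∈ range (n + 1), (catalan m : ℤ) * ballotZ (n - m + 1) 0)
            + (catalan (n + 1) : ℤ) * ballotZ 0 0
          = (∑ m ∈ range (n + 1), ((catalan m : ℤ) * ballotZ (n - m) 0
              + (catalan m : ℤ) * ballotZ (n - m) 1))
            + (ballotZ n 0 + ballotZ n 1) := by
            rw [hc]
            congr 1
            apply Finset.sum_congr rfl
            intro m _
            rw [hterm m]; ring
        _ = (ballotZ n 0 + ballotZ n 1) + (ballotZ n 1 + ballotZ n 2)
            + (ballotZ n 0 + ballotZ n 1) := by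
            rw [Finset.sum_add_distrib, ih 0, ih 1]
        _ = ballotZ (n + 1) 0 + ballotZ (n + 1) (0 + 1) := by
            rw [ballotZ_pascal_zero, show (0:ℕ) + 1 = 1 from rfl,
              show ballotZ (n+1) 1 = ballotZ (n+1) (0+1) from rfl, ballotZ_pascal]
            ring
    | succ ℓ =>
      have hz : ballotZ 0 (ℓ + 1) = 0 := ballotZ_eq_zero (by omega)
      rw [hz, mul_zero, add_zero]
      calc (∑ m ∈ range (n + 1), (catalan m : ℤ) * ballotZ (n - m + 1) (ℓ + 1))
          = (∑ m ∈ range (n + 1), ((catalan m : ℤ) * ballotZ (n - m) ℓ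
              + 2 * ((catalan m : ℤ) * ballotZ (n - m) (ℓ + 1))
              + (catalan m : ℤ) * ballotZ (n - m) (ℓ + 2))) := by
            apply Finset.sum_congr rfl
            intro m _
            rw [ballotZ_pascal]; ring
        _ = (ballotZ n ℓ + ballotZ n (ℓ + 1)) + 2 * (ballotZ n (ℓ + 1) + ballotZ n (ℓ + 2))
            + (ballotZ n (ℓ + 2) + ballotZ n (ℓ + 3)) := by
            rw [Finset.sum_add_distrib, Finset.sum_add_distrib, ← Finset.mul_sum, ih ℓ,
              ih (ℓ + 1), ih (ℓ + 2)]
        _ = ballotZ (n + 1) (ℓ + 1) + ballotZ (n + 1) (ℓ + 1 + 1) := by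
            rw [ballotZ_pascal, ballotZ_pascal]
            ring

lemma dyckPFC_eq_ballot (n : ℕ) (a : ℂ) :
    dyckPFC n a = ∑ ℓ ∈ Finset.range (n + 1), (ballotZ n ℓ : ℂ) * (a - 1) ^ ℓ := by
  unfold dyckPFC
  apply Finset.sum_congr rfl
  intro ℓ hℓ
  have hℓn : ℓ ≤ n := by have := Finset.mem_range.mp hℓ; omega
  congr 1
  have hne : ((n : ℂ) + ℓ + 1) ≠ 0 := by
    intro h
    have := congrArg Complex.re h
    simp at this
    norm_cast at this
  have hkey : (Nat.choose (2 * n) (n + ℓ + 1) : ℂ) * ((n : ℂ) + ℓ + 1)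
      = (Nat.choose (2 * n) (n + ℓ) : ℂ) * ((n : ℂ) - ℓ) := by
    have h := Nat.choose_succ_right_eq (2 * n) (n + ℓ)
    have e : 2 * n - (n + ℓ) = n - ℓ := by omega
    rw [e] at h
    have := congrArg (Nat.cast : ℕ → ℂ) h
    push_cast [Nat.cast_sub hℓn] at this
    convert this using 2 <;> push_cast <;> ring
  unfold ballotZ
  rw [div_mul_eq_mul_div, div_eq_iff hne]
  push_cast
  linear_combination hkey

lemma dyckPFC_zero (a : ℂ) : dyckPFC 0 a = 1 := by
  simp [dyckPFC]

noncomputable def Pb (b : ℂ) (k : ℕ) : ℂ :=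
  ∑ ℓ ∈ Finset.range (k + 1), (ballotZ k ℓ : ℂ) * b ^ ℓ

noncomputable def Sb (b : ℂ) (k : ℕ) : ℂ :=
  ∑ ℓ ∈ Finset.range (k + 1), (ballotZ k (ℓ + 1) : ℂ) * b ^ ℓ

noncomputable def Tb (b : ℂ) (k : ℕ) : ℂ :=
  ∑ ℓ ∈ Finset.range (k + 1), (ballotZ k (ℓ + 2) : ℂ) * b ^ ℓ

lemma Pb_F1 (b : ℂ) (k : ℕ) : b * Sb b k = Pb b k - (ballotZ k 0 : ℂ) := by
  unfold Pb Sb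
  rw [Finset.mul_sum, Finset.sum_range_succ' (fun ℓ => (ballotZ k ℓ : ℂ) * b ^ ℓ) k,
    Finset.sum_range_succ (fun ℓ => b * ((ballotZ k (ℓ + 1) : ℂ) * b ^ ℓ)) k,
    ballotZ_eq_zero (show k < k + 1 by omega)]
  simp only [pow_zero, mul_one, Int.cast_zero, zero_mul, mul_zero, add_zero]
  rw [add_sub_cancel_right]
  apply Finset.sum_congr rfl
  intro ℓ _
  ring

lemma Pb_F4 (b : ℂ) (k : ℕ) : b * Tb b k = Sb b k - (ballotZ k 1 : ℂ) := by
  unfold Sb Tb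
  rw [Finset.mul_sum, Finset.sum_range_succ' (fun ℓ => (ballotZ k (ℓ + 1) : ℂ) * b ^ ℓ) k,
    Finset.sum_range_succ (fun ℓ => b * ((ballotZ k (ℓ + 2) : ℂ) * b ^ ℓ)) k,
    ballotZ_eq_zero (show k < k + 2 by omega)]
  simp only [pow_zero, mul_one, Int.cast_zero, zero_mul, mul_zero, add_zero]
  rw [add_sub_cancel_right]
  apply Finset.sum_congr rfl
  intro ℓ _
  ring

lemma Pb_F2 (b : ℂ) (n : ℕ) :
    (∑ m ∈ Finset.range (n + 1), (catalan m : ℂ) * Pb b (n - m)) = Pb b n + Sb b n := by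
  have hext : ∀ m ∈ Finset.range (n + 1), (catalan m : ℂ) * Pb b (n - m)
      = ∑ ℓ ∈ Finset.range (n + 1), (catalan m : ℂ) * ((ballotZ (n - m) ℓ : ℂ) * b ^ ℓ) := by
    intro m hm
    have hmn : m ≤ n := by have := Finset.mem_range.mp hm; omega
    unfold Pb
    rw [Finset.mul_sum]
    apply (Finset.sum_subset (by apply Finset.range_subset_range.mpr; omega) ?_)
    intro ℓ _ hℓ
    have : n - m < ℓ := by
      simp only [Finset.mem_range, not_lt] at hℓ ⊢; omega
    rw [ballotZ_eq_zero this]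
    simp
  rw [Finset.sum_congr rfl hext, Finset.sum_comm]
  have hin : ∀ ℓ ∈ Finset.range (n + 1),
      (∑ m ∈ Finset.range (n + 1), (catalan m : ℂ) * ((ballotZ (n - m) ℓ : ℂ) * b ^ ℓ))
        = ((ballotZ n ℓ : ℂ) + (ballotZ n (ℓ + 1) : ℂ)) * b ^ ℓ := by
    intro ℓ _
    have hconv := congrArg (Int.cast : ℤ → ℂ) (ballotZ_conv n ℓ)
    push_cast at hconv
    calc (∑ m ∈ Finset.range (n + 1), (catalan m : ℂ) * ((ballotZ (n - m) ℓ : ℂ) * b ^ ℓ))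
        = (∑ m ∈ Finset.range (n + 1), (catalan m : ℂ) * (ballotZ (n - m) ℓ : ℂ)) * b ^ ℓ := by
          rw [Finset.sum_mul]
          apply Finset.sum_congr rfl
          intro m _
          ring
      _ = ((ballotZ n ℓ : ℂ) + (ballotZ n (ℓ + 1) : ℂ)) * b ^ ℓ := by rw [hconv]
  rw [Finset.sum_congr rfl hin]
  unfold Pb Sb
  rw [← Finset.sum_add_distrib]
  apply Finset.sum_congr rfl
  intro ℓ _
  ring

lemma Pb_F3 (b : ℂ) (n : ℕ) : Pb b (n + 1)
    = (ballotZ n 0 : ℂ) + (ballotZ n 1 : ℂ) + b * Pb b n + 2 * (b * Sb b n) + b * Tb b n := by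
  unfold Pb
  rw [Finset.sum_range_succ' (fun ℓ => (ballotZ (n + 1) ℓ : ℂ) * b ^ ℓ) (n + 1)]
  have h0 : ((ballotZ (n + 1) 0 : ℂ)) * b ^ 0 = (ballotZ n 0 : ℂ) + (ballotZ n 1 : ℂ) := by
    rw [ballotZ_pascal_zero]; push_cast; ring
  have hterm : ∀ ℓ, ((ballotZ (n + 1) (ℓ + 1) : ℂ)) * b ^ (ℓ + 1)
      = b * ((ballotZ n ℓ : ℂ) * b ^ ℓ) + 2 * (b * ((ballotZ n (ℓ + 1) : ℂ) * b ^ ℓ))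
        + b * ((ballotZ n (ℓ + 2) : ℂ) * b ^ ℓ) := by
    intro ℓ
    rw [ballotZ_pascal]
    push_cast
    ring
  rw [h0, Finset.sum_congr rfl (fun ℓ _ => hterm ℓ), Finset.sum_add_distrib,
    Finset.sum_add_distrib]
  unfold Sb Tb
  simp only [Finset.mul_sum]
  ring

/-- The key recurrence. -/
lemma dyckPFC_rec (a : ℂ) (hb : a - 1 ≠ 0) (n : ℕ) :
    dyckPFC (n + 1) a = a * ∑ m ∈ Finset.range (n + 1), (catalan m : ℂ) * dyckPFC (n - m) a := by
  set b : ℂ := a - 1 with hbdef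
  have ha : a = b + 1 := by rw [hbdef]; ring
  have hmain : b * dyckPFC (n + 1) a
      = b * (a * ∑ m ∈ Finset.range (n + 1), (catalan m : ℂ) * dyckPFC (n - m) a) := by
    have hD2 : (∑ m ∈ Finset.range (n + 1), (catalan m : ℂ) * dyckPFC (n - m) a)
        = ∑ m ∈ Finset.range (n + 1), (catalan m : ℂ) * Pb b (n - m) := by
      apply Finset.sum_congr rfl
      intro m _
      rw [dyckPFC_eq_ballot, ← hbdef]
      rfl
    rw [dyckPFC_eq_ballot, show (∑ ℓ ∈ Finset.range (n + 1 + 1), (ballotZ (n+1) ℓ : ℂ) * (a - 1) ^ ℓ) = Pb b (n+1) from rfl,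
      hD2, Pb_F2, Pb_F3]
    have h1 := Pb_F1 b n
    have h4 := Pb_F4 b n
    rw [ha]
    linear_combination b * h1 + b * h4
  exact mul_left_cancel₀ hb hmain

lemma choose_le_two_pow' (n k : ℕ) : Nat.choose n k ≤ 2 ^ n := by
  calc Nat.choose n k ≤ ∑ m ∈ Finset.range (n + 1), Nat.choose n m := by
        by_cases h : k ≤ n
        · exact Finset.single_le_sum (fun i _ => Nat.zero_le _)
            (Finset.mem_range.mpr (by omega))
        · rw [Nat.choose_eq_zero_of_lt (by omega)]
          exact Nat.zero_le _
    _ = 2 ^ n := Nat.sum_range_choose n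

lemma choose_central_le_four_pow (n k : ℕ) : Nat.choose (2 * n) k ≤ 4 ^ n := by
  calc Nat.choose (2 * n) k ≤ 2 ^ (2 * n) := choose_le_two_pow' _ _
    _ = 4 ^ n := by rw [pow_mul]; norm_num

lemma catalan_le_four_pow (n : ℕ) : catalan n ≤ 4 ^ n := by
  have h1 : catalan n ≤ (n + 1) * catalan n := Nat.le_mul_of_pos_left _ (by omega)
  have h2 : (n + 1) * catalan n = n.centralBinom := succ_mul_catalan_eq_centralBinom n
  have h3 : n.centralBinom = Nat.choose (2 * n) n := rfl
  calc catalan n ≤ (n + 1) * catalan n := h1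
    _ = Nat.choose (2 * n) n := by rw [h2, h3]
    _ ≤ 4 ^ n := choose_central_le_four_pow n n

lemma ballotZ_nonneg (n ℓ : ℕ) : 0 ≤ ballotZ n ℓ := by
  unfold ballotZ
  rw [sub_nonneg, Int.ofNat_le]
  by_cases h : ℓ ≤ n
  · have key := Nat.choose_succ_right_eq (2 * n) (n + ℓ)
    have e : 2 * n - (n + ℓ) = n - ℓ := by omega
    rw [e] at key
    have hmul : Nat.choose (2 * n) (n + ℓ + 1) * (n + ℓ + 1)
        ≤ Nat.choose (2 * n) (n + ℓ) * (n + ℓ + 1) := by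
      rw [key]
      exact Nat.mul_le_mul_left _ (by omega)
    exact Nat.le_of_mul_le_mul_right hmul (by omega)
  · rw [Nat.choose_eq_zero_of_lt (by omega), Nat.choose_eq_zero_of_lt (by omega)]

lemma ballotZ_le (n ℓ : ℕ) : ballotZ n ℓ ≤ 4 ^ n := by
  unfold ballotZ
  have h1 : Nat.choose (2 * n) (n + ℓ) ≤ 4 ^ n := choose_central_le_four_pow n _
  have : (Nat.choose (2 * n) (n + ℓ) : ℤ) ≤ (4 : ℤ) ^ n := by exact_mod_cast h1
  have h0 : (0 : ℤ) ≤ (Nat.choose (2 * n) (n + ℓ + 1) : ℤ) := Int.ofNat_nonneg _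
  linarith

lemma ballotZ_abs_le (n ℓ : ℕ) : ‖((ballotZ n ℓ : ℤ) : ℂ)‖ ≤ 4 ^ n := by
  rw [Complex.norm_intCast]
  have h1 := ballotZ_nonneg n ℓ
  have h2 := ballotZ_le n ℓ
  rw [abs_of_nonneg (by exact_mod_cast h1 : (0:ℝ) ≤ ((ballotZ n ℓ : ℤ) : ℝ))]
  exact_mod_cast h2

lemma dyckPFC_bound {a : ℂ} (ha : ‖a‖ < 1 / 2) (n : ℕ) :
    ‖dyckPFC n a‖ ≤ (n + 1) * 6 ^ n := by
  rw [dyckPFC_eq_ballot]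
  have hb : ‖a - 1‖ ≤ 3 / 2 := by
    have h := norm_sub_le a (1 : ℂ)
    simp only [norm_one] at h
    linarith
  calc ‖∑ ℓ ∈ Finset.range (n + 1), (ballotZ n ℓ : ℂ) * (a - 1) ^ ℓ‖
      ≤ ∑ ℓ ∈ Finset.range (n + 1), ‖(ballotZ n ℓ : ℂ) * (a - 1) ^ ℓ‖ :=
        norm_sum_le _ _
    _ ≤ ∑ ℓ ∈ Finset.range (n + 1), (6 : ℝ) ^ n := by
        apply Finset.sum_le_sum
        intro ℓ hℓ
        have hℓn : ℓ ≤ n := by have := Finset.mem_range.mp hℓ; omega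
        rw [norm_mul, norm_pow]
        calc ‖((ballotZ n ℓ : ℂ))‖ * ‖a - 1‖ ^ ℓ
            ≤ 4 ^ n * (3 / 2 : ℝ) ^ ℓ := by
              apply mul_le_mul (ballotZ_abs_le n ℓ) (pow_le_pow_left₀ (by positivity) hb ℓ)
                (by positivity) (by positivity)
          _ ≤ 4 ^ n * (3 / 2 : ℝ) ^ n := by
              have : ((3:ℝ)/2) ^ ℓ ≤ ((3:ℝ)/2) ^ n := pow_le_pow_right₀ (by norm_num) hℓn
              nlinarith [pow_pos (show (0:ℝ) < 4 by norm_num) n]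
          _ = 6 ^ n := by rw [← mul_pow]; norm_num
    _ = (n + 1) * 6 ^ n := by rw [Finset.sum_const, Finset.card_range]; push_cast; ring

lemma catalan_conv (n : ℕ) :
    (∑ k ∈ Finset.range (n + 1), catalan k * catalan (n - k)) = catalan (n + 1) := by
  rw [catalan_succ', Finset.Nat.sum_antidiagonal_eq_sum_range_succ_mk]

set_option maxHeartbeats 1000000 in
theorem dyckPF_generating_function (a : ℂ) (ha : a ≠ 0) (haSmall : ‖a‖ < 1 / 2) :
    ∃ ε > 0, ∀ t : ℂ, ‖t‖ < ε →
      HasSum (fun n : ℕ => dyckPFC n a * t ^ n)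
        (2 / (2 - a * (1 - (1 - 4 * t) ^ ((1 : ℂ) / 2)))) := by
  refine ⟨1 / 32, by norm_num, ?_⟩
  intro t ht
  have hb1 : a - 1 ≠ 0 := by
    intro h
    have h1 : a = 1 := by linear_combination h
    rw [h1] at haSmall
    simp only [norm_one] at haSmall
    norm_num at haSmall
  set x : ℝ := ‖t‖ with hx
  have hx0 : (0:ℝ) ≤ x := norm_nonneg t
  have hx32 : x < 1 / 32 := ht
  -- summable : dyck series
  have hD : Summable (fun n => ‖dyckPFC n a * t ^ n‖) := by
    have hr6 : (6:ℝ) * x < 1 := by linarith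
    have h1 : Summable (fun n : ℕ => (n:ℝ) ^ 1 * (6 * x) ^ n) :=
      summable_pow_mul_geometric_of_norm_lt_one 1
        (by rw [Real.norm_eq_abs, abs_of_nonneg (by positivity)]; exact hr6)
    have h2 : Summable (fun n : ℕ => (6 * x) ^ n) :=
      summable_geometric_of_lt_one (by positivity) hr6
    have hsum : Summable (fun n : ℕ => ((n:ℝ) + 1) * (6 * x) ^ n) := by
      apply (h1.add h2).congr
      intro n
      push_cast
      ring
    apply Summable.of_nonneg_of_le (fun n => norm_nonneg _) ?_ hsum
    intro n
    rw [norm_mul, norm_pow, ← hx]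
    calc ‖dyckPFC n a‖ * x ^ n ≤ ((n:ℝ) + 1) * 6 ^ n * x ^ n :=
          mul_le_mul_of_nonneg_right (dyckPFC_bound haSmall n) (by positivity)
      _ = ((n:ℝ) + 1) * (6 * x) ^ n := by rw [mul_pow]; ring
  -- summable : catalan series
  have hcterm : ∀ n : ℕ, ‖(catalan n : ℂ) * t ^ (n + 1)‖ ≤ x * (4 * x) ^ n := by
    intro n
    rw [norm_mul, norm_pow, ← hx]
    have hcat4 : ‖((catalan n : ℂ))‖ ≤ 4 ^ n := by
      rw [show ((catalan n : ℂ)) = ((catalan n : ℕ) : ℂ) from rfl, Complex.norm_natCast]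
      exact_mod_cast catalan_le_four_pow n
    calc ‖((catalan n : ℂ))‖ * x ^ (n + 1) ≤ 4 ^ n * x ^ (n + 1) :=
          mul_le_mul_of_nonneg_right hcat4 (by positivity)
      _ = x * (4 * x) ^ n := by rw [mul_pow, pow_succ]; ring
  have hgeo4 : Summable (fun n : ℕ => x * (4 * x) ^ n) :=
    (summable_geometric_of_lt_one (by positivity) (by linarith)).mul_left x
  have hcat : Summable (fun n => ‖(catalan n : ℂ) * t ^ (n + 1)‖) :=
    Summable.of_nonneg_of_le (fun n => norm_nonneg _) hcterm hgeo4
  set Ct := ∑' n : ℕ, (catalan n : ℂ) * t ^ (n + 1) with hCtdef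
  set Ft := ∑' n : ℕ, dyckPFC n a * t ^ n with hFtdef
  -- bound on Ct
  have hCtle : ‖Ct‖ ≤ 1 / 28 := by
    have h1 : ‖Ct‖ ≤ ∑' n : ℕ, ‖(catalan n : ℂ) * t ^ (n + 1)‖ := norm_tsum_le_tsum_norm hcat
    have h2 : (∑' n : ℕ, ‖(catalan n : ℂ) * t ^ (n + 1)‖) ≤ ∑' n : ℕ, x * (4 * x) ^ n :=
      Summable.tsum_le_tsum hcterm hcat hgeo4
    have h3 : (∑' n : ℕ, x * (4 * x) ^ n) = x * (1 - 4 * x)⁻¹ := by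
      rw [tsum_mul_left, tsum_geometric_of_lt_one (by positivity) (by linarith)]
    have h5 : (1 - 4 * x)⁻¹ ≤ 8 / 7 := by
      have := inv_anti₀ (show (0:ℝ) < 7/8 by norm_num) (by linarith : (7:ℝ)/8 ≤ 1 - 4 * x)
      calc (1 - 4 * x)⁻¹ ≤ ((7:ℝ)/8)⁻¹ := this
        _ = 8 / 7 := by norm_num
    have h6 : x * (1 - 4 * x)⁻¹ ≤ 1 / 28 := by
      have hinv0 : (0:ℝ) ≤ (1 - 4 * x)⁻¹ := by
        apply inv_nonneg.mpr; linarith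
      calc x * (1 - 4 * x)⁻¹ ≤ (1/32) * (8/7) := by
            apply mul_le_mul (le_of_lt hx32) h5 hinv0 (by norm_num)
        _ ≤ 1 / 28 := by norm_num
    linarith
  -- Cauchy product A : Ct * Ct = Ct - t
  have hA : Ct * Ct = Ct - t := by
    have hc := tsum_mul_tsum_eq_tsum_sum_range_of_summable_norm hcat hcat
    have hinner : ∀ n : ℕ,
        (∑ k ∈ Finset.range (n + 1),
          ((catalan k : ℂ) * t ^ (k + 1)) * ((catalan (n - k) : ℂ) * t ^ (n - k + 1)))
          = (catalan (n + 1) : ℂ) * t ^ (n + 2) := by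
      intro n
      have hterm : ∀ k ∈ Finset.range (n + 1),
          ((catalan k : ℂ) * t ^ (k + 1)) * ((catalan (n - k) : ℂ) * t ^ (n - k + 1))
            = ((catalan k : ℂ) * (catalan (n - k) : ℂ)) * t ^ (n + 1 + 1) := by
        intro k hk
        have hkn : k ≤ n := by have := Finset.mem_range.mp hk; omega
        have he : n + 1 + 1 = (k + 1) + (n - k + 1) := by omega
        rw [he, pow_add]
        ring
      rw [Finset.sum_congr rfl hterm, ← Finset.sum_mul]
      congr 1
      have hcc := congrArg (Nat.cast : ℕ → ℂ) (catalan_conv n)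
      push_cast at hcc
      exact hcc
    calc Ct * Ct = ∑' n : ℕ, ∑ k ∈ Finset.range (n + 1),
          ((catalan k : ℂ) * t ^ (k + 1)) * ((catalan (n - k) : ℂ) * t ^ (n - k + 1)) := hc
      _ = ∑' n : ℕ, (catalan (n + 1) : ℂ) * t ^ (n + 1 + 1) := tsum_congr hinner
      _ = Ct - t := by
          have hz := Summable.tsum_eq_zero_add (f := fun n : ℕ => (catalan n : ℂ) * t ^ (n + 1))
            hcat.of_norm
          rw [← hCtdef] at hz
          simp only [catalan_zero, Nat.cast_one, one_mul, pow_one] at hz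
          rw [eq_sub_iff_add_eq, hz, pow_one]
          ring
  -- Cauchy product B : (a * Ct) * Ft = Ft - 1
  have hfa : Summable (fun n => ‖a * ((catalan n : ℂ) * t ^ (n + 1))‖) := by
    apply (hcat.mul_left ‖a‖).congr
    intro n
    exact (norm_mul a _).symm
  have hB : a * Ct * Ft = Ft - 1 := by
    have hc := tsum_mul_tsum_eq_tsum_sum_range_of_summable_norm hfa hD
    rw [tsum_mul_left, ← hCtdef, ← hFtdef] at hc
    have hinner : ∀ n : ℕ,
        (∑ k ∈ Finset.range (n + 1),
          (a * ((catalan k : ℂ) * t ^ (k + 1))) * (dyckPFC (n - k) a * t ^ (n - k)))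
          = dyckPFC (n + 1) a * t ^ (n + 1) := by
      intro n
      have hterm : ∀ k ∈ Finset.range (n + 1),
          (a * ((catalan k : ℂ) * t ^ (k + 1))) * (dyckPFC (n - k) a * t ^ (n - k))
            = ((catalan k : ℂ) * dyckPFC (n - k) a) * (a * t ^ (n + 1)) := by
        intro k hk
        have hkn : k ≤ n := by have := Finset.mem_range.mp hk; omega
        have he : n + 1 = (k + 1) + (n - k) := by omega
        rw [he, pow_add]
        ring
      rw [Finset.sum_congr rfl hterm, ← Finset.sum_mul, dyckPFC_rec a hb1 n]
      ring
    calc a * Ct * Ft = ∑' n : ℕ, ∑ k ∈ Finset.range (n + 1),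
          (a * ((catalan k : ℂ) * t ^ (k + 1))) * (dyckPFC (n - k) a * t ^ (n - k)) := hc
      _ = ∑' n : ℕ, dyckPFC (n + 1) a * t ^ (n + 1) := tsum_congr hinner
      _ = Ft - 1 := by
          have hz := Summable.tsum_eq_zero_add (f := fun n : ℕ => dyckPFC n a * t ^ n) hD.of_norm
          simp only [dyckPFC_zero, pow_zero, mul_one, one_mul] at hz
          rw [← hFtdef] at hz
          rw [eq_sub_iff_add_eq, hz]
          ring
  -- 1 - a * Ct ≠ 0
  have haCt : ‖a * Ct‖ < 1 := by
    rw [norm_mul]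
    nlinarith [norm_nonneg Ct, norm_nonneg a]
  have hne1 : (1 : ℂ) - a * Ct ≠ 0 := by
    intro h
    have h1 : a * Ct = 1 := by linear_combination -h
    rw [h1] at haCt
    simp at haCt
  have hFt_eq : Ft * (1 - a * Ct) = 1 := by linear_combination -hB
  -- square root
  have hz0 : (1 : ℂ) - 4 * t ≠ 0 := by
    intro h
    have h1 : (4 : ℂ) * t = 1 := by linear_combination -h
    have h2 := congrArg (‖·‖) h1
    rw [norm_mul, Complex.norm_ofNat, norm_one, ← hx] at h2
    linarith
  set s := (1 - 4 * t) ^ ((1 : ℂ) / 2) with hsdef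
  have hss : s * s = 1 - 4 * t := by
    rw [hsdef, ← Complex.cpow_add _ _ hz0]
    norm_num
  have h2c : ((1 : ℂ) - 2 * Ct) * ((1 : ℂ) - 2 * Ct) = 1 - 4 * t := by
    linear_combination 4 * hA
  have hfac : (s - (1 - 2 * Ct)) * (s + (1 - 2 * Ct)) = 0 := by
    linear_combination hss - h2c
  have hsre : 0 ≤ s.re := by
    rw [hsdef, show ((1 : ℂ) / 2) = (2⁻¹ : ℂ) by norm_num, Complex.cpow_inv_two_re]
    exact Real.sqrt_nonneg _
  have hCtre : Ct.re ≤ 1 / 28 := by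
    have := Complex.abs_re_le_norm Ct
    have h2 := abs_le.mp (le_trans this hCtle)
    exact h2.2
  have hplus : s + (1 - 2 * Ct) ≠ 0 := by
    intro h
    have hre := congrArg Complex.re h
    simp only [Complex.add_re, Complex.sub_re, Complex.one_re, Complex.mul_re,
      Complex.zero_re] at hre
    have h2re : ((2 : ℂ)).re = 2 := by norm_num
    have h2im : ((2 : ℂ)).im = 0 := by norm_num
    rw [h2re, h2im] at hre
    simp only [zero_mul, sub_zero] at hre
    linarith
  have hs_eq : s = 1 - 2 * Ct := by
    rcases mul_eq_zero.mp hfac with h | h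
    · linear_combination h
    · exact absurd h hplus
  have hval : (2 : ℂ) / (2 - a * (1 - s)) = Ft := by
    rw [hs_eq]
    rw [show (2 : ℂ) - a * (1 - (1 - 2 * Ct)) = 2 * (1 - a * Ct) by ring]
    rw [div_eq_iff (mul_ne_zero two_ne_zero hne1)]
    linear_combination -2 * hFt_eq
  rw [hval]
  exact hD.of_norm.hasSum
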